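/- Let X be a random vector on [0,1]^p with density f satisfying 0 < c₁ ≤ f ≤ c₂, let J ⊆ {1,...,p}, I ⊊ J, and let A^{(I)} be a measurable subset of [0,1]^{|I|} with positive measure. Let μ be a measurable function of x^{(J)} that is piecewise constant over a finite product partition {A_k × A^{(I)}} refining the conditioning event, with f_ℓ the cell-averaged density and Z the random vector with density f_ℓ. Then E[μ(X^{(J)}) | X^{(I)} ∈ A^{(I)}] = E[μ(Z^{(J)}) | Z^{(I)} ∈ A^{(I)}]. -/

import Mathlib

open MeasureTheory

/-- Lemma 2 of the paper: for μ piecewise constant over a finite Cartesian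
partition of [0,1]^p (depending only on the J-coordinates), a conditioning set A^{(I)}
(depending only on the I-coordinates, I ⊊ J) that is a union of partition cells, and f_ℓ
the cell-averaged density, the conditional expectations agree:
E[μ(X^{(J)}) | X^{(I)} ∈ A^{(I)}] = E[μ(Z^{(J)}) | Z^{(I)} ∈ A^{(I)}], expressed via the
densities f and f_ℓ of X and Z. -/
theorem stmt11 (p : ℕ) (f : (Fin p → ℝ) → ℝ) (c₁ c₂ : ℝ)
    (hc₁ : 0 < c₁) (hc₁₂ : c₁ ≤ c₂)
    (hfb : ∀ x ∈ Set.Icc (0 : Fin p → ℝ) 1, c₁ ≤ f x ∧ f x ≤ c₂)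
    (hfint : IntegrableOn f (Set.Icc (0 : Fin p → ℝ) 1) volume)
    (I J : Finset (Fin p)) (hIJ : I ⊂ J)
    (K : ℕ) (A : Fin K → Set (Fin p → ℝ))
    (hAmeas : ∀ k, MeasurableSet (A k))
    (hApos : ∀ k, 0 < volume (A k))
    (hcover : (⋃ k, A k) = Set.Icc (0 : Fin p → ℝ) 1)
    (hdisj : Pairwise (Function.onFun Disjoint A))
    (μf : (Fin p → ℝ) → ℝ) (hμmeas : Measurable μf)
    (hμJ : ∀ x y : Fin p → ℝ, (∀ j ∈ J, x j = y j) → μf x = μf y)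
    (hμpc : ∀ k, ∀ x ∈ A k, ∀ y ∈ A k, μf x = μf y)
    (AI : Set (Fin p → ℝ))
    (hAII : ∀ x y : Fin p → ℝ, (∀ i ∈ I, x i = y i) → (x ∈ AI ↔ y ∈ AI))
    (s : Finset (Fin K)) (hAIcells : AI ∩ Set.Icc (0 : Fin p → ℝ) 1 = ⋃ k ∈ s, A k)
    (hs : s.Nonempty)
    (fℓ : (Fin p → ℝ) → ℝ)
    (hfℓ : ∀ k, ∀ x ∈ A k, fℓ x = (∫ y in A k, f y) / (volume (A k)).toReal) :
    (∫ x in AI ∩ Set.Icc (0 : Fin p → ℝ) 1, μf x * f x) /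
        (∫ x in AI ∩ Set.Icc (0 : Fin p → ℝ) 1, f x) =
      (∫ x in AI ∩ Set.Icc (0 : Fin p → ℝ) 1, μf x * fℓ x) /
        (∫ x in AI ∩ Set.Icc (0 : Fin p → ℝ) 1, fℓ x) := by
  have hsub : ∀ k, A k ⊆ Set.Icc (0 : Fin p → ℝ) 1 := fun k =>
    hcover ▸ Set.subset_iUnion A k
  have hIccfin : volume (Set.Icc (0 : Fin p → ℝ) 1) < ⊤ :=
    (isCompact_Icc).measure_lt_top
  have hfin : ∀ k, volume (A k) ≠ ⊤ := fun k =>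
    ((measure_mono (hsub k)).trans_lt hIccfin).ne
  have hvol : ∀ k, (volume (A k)).toReal ≠ 0 := fun k =>
    (ENNReal.toReal_pos (hApos k).ne' (hfin k)).ne'
  -- per-cell equalities
  have hcell : ∀ k, (∫ x in A k, μf x * f x) = (∫ x in A k, μf x * fℓ x) ∧
      (∫ x in A k, f x) = (∫ x in A k, fℓ x) ∧
      IntegrableOn (fun x => μf x * f x) (A k) ∧
      IntegrableOn (fun x => μf x * fℓ x) (A k) ∧
      IntegrableOn f (A k) ∧ IntegrableOn fℓ (A k) := by
    intro k
    obtain ⟨x₀, hx₀⟩ := nonempty_of_measure_ne_zero (hApos k).ne'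
    set c : ℝ := (∫ y in A k, f y) / (volume (A k)).toReal with hc
    have hfl : Set.EqOn fℓ (fun _ => c) (A k) := fun x hx => hfℓ k x hx
    have hμ : Set.EqOn μf (fun _ => μf x₀) (A k) := fun x hx => hμpc k x hx x₀ hx₀
    have hfk : IntegrableOn f (A k) := hfint.mono_set (hsub k)
    have hflk : IntegrableOn fℓ (A k) :=
      ((integrableOn_const (hfin k))).congr_fun
        hfl.symm (hAmeas k)
    have hflint : (∫ x in A k, fℓ x) = ∫ x in A k, f x := by
      rw [setIntegral_congr_fun (hAmeas k) hfl, setIntegral_const, smul_eq_mul, measureReal_def, hc]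
      rw [mul_div_assoc', mul_comm, mul_div_assoc, div_self (hvol k), mul_one]
    refine ⟨?_, hflint.symm, ?_, ?_, hfk, hflk⟩
    · have h1 : (∫ x in A k, μf x * f x) = μf x₀ * ∫ x in A k, f x := by
        rw [setIntegral_congr_fun (hAmeas k) (fun x hx => by
          show μf x * f x = μf x₀ * f x; rw [hμ hx]), integral_const_mul]
      have h2 : (∫ x in A k, μf x * fℓ x) = μf x₀ * ∫ x in A k, fℓ x := by
        rw [setIntegral_congr_fun (hAmeas k) (fun x hx => by
          show μf x * fℓ x = μf x₀ * fℓ x; rw [hμ hx]), integral_const_mul]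
      rw [h1, h2, hflint]
    · exact IntegrableOn.congr_fun (hfk.const_mul (μf x₀))
        (fun x hx => by show μf x₀ * f x = μf x * f x; rw [hμ hx]) (hAmeas k)
    · exact IntegrableOn.congr_fun (hflk.const_mul (μf x₀))
        (fun x hx => by show μf x₀ * fℓ x = μf x * fℓ x; rw [hμ hx]) (hAmeas k)
  rw [hAIcells]
  have hpair : (↑s : Set (Fin K)).Pairwise (Function.onFun Disjoint A) :=
    hdisj.set_pairwise _
  rw [integral_biUnion_finset s (fun k _ => hAmeas k) hpair
      (fun k _ => (hcell k).2.2.1),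
    integral_biUnion_finset s (fun k _ => hAmeas k) hpair
      (fun k _ => (hcell k).2.2.2.2.1),
    integral_biUnion_finset s (fun k _ => hAmeas k) hpair
      (fun k _ => (hcell k).2.2.2.1),
    integral_biUnion_finset s (fun k _ => hAmeas k) hpair
      (fun k _ => (hcell k).2.2.2.2.2)]
  rw [Finset.sum_congr rfl (fun k _ => (hcell k).1),
    Finset.sum_congr rfl (fun k _ => (hcell k).2.1)]
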